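/- Let g : ℕ → ℝ be any function and define z_0 = 1 and z_k = ∑_{j=0}^{k−1} z_j g(j)/(k−j)! for k ≥ 1. Then for all k ≥ 1, z_k = g(0)·(1/k! + ∑_{h=1}^{k−1} ∑_{1≤i_1<⋯<i_h<k} [1/(i_1!(i_2−i_1)!⋯(k−i_h)!)] ∏_{t=1}^h g(i_t)). -/

import Mathlib

open Finset

/-- For a chain `1 ≤ i₁ < ⋯ < i_h < k` encoded as the finset
    `S = {i₁, …, i_h} ⊆ (0, k)`, the product of factorials
    `i₁! (i₂ - i₁)! ⋯ (k - i_h)!` of the successive gaps. -/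
def gapFactorials (k : ℕ) (S : Finset ℕ) : ℝ :=
  let L : List ℕ := 0 :: (S.sort (· ≤ ·) ++ [k])
  (List.zipWith (fun p n => ((Nat.factorial (n - p) : ℕ) : ℝ)) L L.tail).prod

lemma prod_zipWith_append (f : ℕ → ℕ → ℝ) :
    ∀ (L : List ℕ) (hL : L ≠ []) (a : ℕ),
      (List.zipWith f (L ++ [a]) (L ++ [a]).tail).prod
        = (List.zipWith f L L.tail).prod * f (L.getLast hL) a := by
  intro L
  induction L with
  | nil => intro h; exact absurd rfl h
  | cons x L ih =>
    intro _ a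
    cases L with
    | nil => simp
    | cons y L =>
      have := ih (by simp) a
      simp only [List.cons_append, List.tail_cons, List.zipWith_cons_cons,
        List.prod_cons] at this ⊢
      rw [this, List.getLast_cons (by simp : (y :: L : List ℕ) ≠ [])]
      ring

lemma sort_insert_max {j : ℕ} {S : Finset ℕ} (h : ∀ i ∈ S, i < j) :
    (insert j S).sort (· ≤ ·) = S.sort (· ≤ ·) ++ [j] := by
  have hjS : j ∉ S := fun hj => lt_irrefl j (h j hj)
  refine (fun hp h1 h2 => List.Perm.eq_of_pairwise' (r := (· ≤ ·)) h1 h2 hp) ?_ ?_ ?_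
  · rw [← Multiset.coe_eq_coe]
    have h1 : ((insert j S).sort (· ≤ ·) : Multiset ℕ) = (insert j S).val :=
      Finset.sort_eq _ _
    have h2 : ((S.sort (· ≤ ·) : List ℕ) : Multiset ℕ) = S.val := Finset.sort_eq _ _
    rw [h1]
    have : ((S.sort (· ≤ ·) ++ [j] : List ℕ) : Multiset ℕ)
        = (S.sort (· ≤ ·) : List ℕ) + ([j] : List ℕ) := by
      exact_mod_cast rfl
    rw [this, h2, Finset.insert_val_of_notMem hjS]
    simp only [Multiset.coe_singleton]
    rw [add_comm, Multiset.singleton_add]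
  · exact Finset.pairwise_sort _ _
  · rw [List.pairwise_append]
    refine ⟨Finset.pairwise_sort _ _, List.pairwise_singleton _ j, ?_⟩
    intro a ha b hb
    rw [List.mem_singleton] at hb
    subst hb
    exact le_of_lt (h a (Finset.mem_sort (· ≤ ·) |>.mp ha))

lemma gapFactorials_empty (k : ℕ) : gapFactorials k ∅ = (Nat.factorial k : ℝ) := by
  simp [gapFactorials]

lemma gapFactorials_insert {k j : ℕ} (hjk : j < k) {S : Finset ℕ}
    (hS : ∀ i ∈ S, i < j) :
    gapFactorials k (insert j S) = gapFactorials j S * (Nat.factorial (k - j) : ℝ) := by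
  show (List.zipWith (fun p n => ((Nat.factorial (n - p) : ℕ) : ℝ))
      (0 :: ((insert j S).sort (· ≤ ·) ++ [k]))
      ((insert j S).sort (· ≤ ·) ++ [k])).prod
    = (List.zipWith (fun p n => ((Nat.factorial (n - p) : ℕ) : ℝ))
      (0 :: (S.sort (· ≤ ·) ++ [j]))
      (S.sort (· ≤ ·) ++ [j])).prod * (Nat.factorial (k - j) : ℝ)
  rw [sort_insert_max hS]
  have hne : (0 :: (S.sort (· ≤ ·) ++ [j]) : List ℕ) ≠ [] := by simp
  have h2 := prod_zipWith_append (fun p n => ((Nat.factorial (n - p) : ℕ) : ℝ))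
      (0 :: (S.sort (· ≤ ·) ++ [j])) hne k
  simp only [List.cons_append, List.tail_cons] at h2
  rw [h2]
  congr 2
  rw [List.getLast_cons (by simp), List.getLast_concat]

lemma sum_powerset_Ioo (F : Finset ℕ → ℝ) :
    ∀ k, 1 ≤ k →
      ∑ S ∈ (Finset.Ioo 0 k).powerset, F S
        = F ∅ + ∑ j ∈ Finset.Ioo 0 k, ∑ S ∈ (Finset.Ioo 0 j).powerset, F (insert j S) := by
  intro k hk
  induction k with
  | zero => omega
  | succ k ih =>
    rcases Nat.eq_or_lt_of_le hk with h1 | h1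
    · have : k = 0 := by omega
      subst this
      have h0 : Finset.Ioo 0 1 = (∅ : Finset ℕ) := by ext x; simp; omega
      simp [h0]
    · have hk1 : 1 ≤ k := by omega
      have hIoo : Finset.Ioo 0 (k + 1) = insert k (Finset.Ioo 0 k) := by
        ext x; simp [Finset.mem_Ioo, Finset.mem_insert]; omega
      have hknotin : k ∉ Finset.Ioo 0 k := by simp
      rw [hIoo, Finset.powerset_insert, Finset.sum_union, Finset.sum_image, ih hk1,
        Finset.sum_insert hknotin]
      · ring
      · intro S hS T hT hST
        rw [Finset.mem_coe, Finset.mem_powerset] at hS hT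
        have hkS : k ∉ S := fun h => hknotin (hS h)
        have hkT : k ∉ T := fun h => hknotin (hT h)
        ext x
        constructor
        · intro hx
          have : x ∈ insert k T := hST ▸ Finset.mem_insert_of_mem hx
          rcases Finset.mem_insert.mp this with h | h
          · exact absurd (h ▸ hx) hkS
          · exact h
        · intro hx
          have : x ∈ insert k S := hST ▸ Finset.mem_insert_of_mem hx
          rcases Finset.mem_insert.mp this with h | h
          · exact absurd (h ▸ hx) hkT
          · exact h
      · rw [Finset.disjoint_left]
        intro S hS hS'
        rw [Finset.mem_powerset] at hS
        rw [Finset.mem_image] at hS'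
        obtain ⟨T, _, hT⟩ := hS'
        exact hknotin (hS (hT ▸ Finset.mem_insert_self k T))

theorem iterated_convolution_formula
    (g : ℕ → ℝ)
    (z : ℕ → ℝ) (hz0 : z 0 = 1)
    (hz : ∀ k, 1 ≤ k →
      z k = ∑ j ∈ Finset.range k, z j * g j / (Nat.factorial (k - j))) :
    ∀ k, 1 ≤ k →
      z k = g 0 *
        ∑ S ∈ (Finset.Ioo 0 k).powerset,
          (1 / gapFactorials k S) * ∏ i ∈ S, g i := by
  intro k
  induction k using Nat.strong_induction_on with
  | _ k ih =>
    intro hk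
    rw [hz k hk]
    have hrange : Finset.range k = insert 0 (Finset.Ioo 0 k) := by
      rw [Finset.range_eq_Ico, ← Finset.Ioo_insert_left hk]
    rw [hrange, Finset.sum_insert (by simp)]
    rw [sum_powerset_Ioo _ k hk]
    have hempty : (1 / gapFactorials k ∅) * ∏ i ∈ (∅ : Finset ℕ), g i
        = 1 / (Nat.factorial k : ℝ) := by
      rw [gapFactorials_empty]; simp
    rw [hempty]
    have hterm : ∀ j ∈ Finset.Ioo 0 k,
        z j * g j / (Nat.factorial (k - j))
          = g 0 * ∑ S ∈ (Finset.Ioo 0 j).powerset,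
              (1 / gapFactorials k (insert j S)) * ∏ i ∈ insert j S, g i := by
      intro j hj
      rw [Finset.mem_Ioo] at hj
      rw [ih j hj.2 hj.1, Finset.mul_sum, Finset.sum_mul, Finset.sum_div, Finset.mul_sum]
      apply Finset.sum_congr rfl
      intro S hS
      rw [Finset.mem_powerset] at hS
      have hSlt : ∀ i ∈ S, i < j := fun i hi => (Finset.mem_Ioo.mp (hS hi)).2
      have hjS : j ∉ S := fun h => lt_irrefl j (hSlt j h)
      rw [gapFactorials_insert hj.2 hSlt, Finset.prod_insert hjS]
      simp only [one_div, div_eq_mul_inv, mul_inv]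
      ring
    rw [Finset.sum_congr rfl hterm, ← Finset.mul_sum, hz0]
    simp only [one_div, Nat.sub_zero]
    ring
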